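/- Let A ⊂ ℤ≥0 finite with 0 ∈ A, N = #A ≥ 2, A(x) = Σ_{a∈A} x^a. Suppose A(x) has a spectrum θ₁,...,θ_{N-1} and the number of roots of A(x) on the unit circle is less than 3N/2 − 1. Then the set G = { e^{2πi(θᵢ-θⱼ)} : 0 ≤ i,j ≤ N-1 } (with θ₀ = 0) is a finite multiplicative group of complex numbers. -/

import Mathlib

open Polynomial Complex Pointwise

lemma key_mul (B : Finset ℂ) (hB0 : ∀ x ∈ B, x ≠ 0)
    (hcard : 2 * (B / B).card < 3 * B.card) :
    ∀ g ∈ B / B, ∀ h ∈ B / B, g * h ∈ B / B := by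
  have hDne0 : ∀ g ∈ B / B, g ≠ 0 := by
    intro g hg
    obtain ⟨u, hu, v, hv, rfl⟩ := Finset.mem_div.1 hg
    exact div_ne_zero (hB0 u hu) (hB0 v hv)
  have hbig : ∀ g ∈ B / B, B.card < 2 * ((B.image (g * ·)) ∩ B).card := by
    intro g hg
    obtain ⟨u, hu, v, hv, rfl⟩ := Finset.mem_div.1 hg
    have hune := hB0 u hu
    have hvne := hB0 v hv
    have hsub : (B.image ((u / v) * ·)) ∪ B ⊆ (B / B).image (u * ·) := by
      intro x hx
      rcases Finset.mem_union.1 hx with hx | hx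
      · obtain ⟨b, hb, rfl⟩ := Finset.mem_image.1 hx
        exact Finset.mem_image.2 ⟨b / v, Finset.mem_div.2 ⟨b, hb, v, hv, rfl⟩, by
          field_simp⟩
      · exact Finset.mem_image.2 ⟨x / u, Finset.mem_div.2 ⟨x, hx, u, hu, rfl⟩, by
          field_simp⟩
    have h1 : ((B.image ((u / v) * ·)) ∪ B).card ≤ (B / B).card :=
      le_trans (Finset.card_le_card hsub) (Finset.card_image_le)
    have h2 : (B.image ((u / v) * ·)).card = B.card := by
      apply Finset.card_image_of_injective
      exact mul_right_injective₀ (div_ne_zero hune hvne)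
    have h3 := Finset.card_union_add_card_inter (B.image ((u / v) * ·)) B
    omega
  intro g hg h hh
  have hgne := hDne0 g hg
  have hb1 : B.card < 2 * ((B.image (h * ·)) ∩ B).card := hbig h hh
  have hb2 : B.card < 2 * ((B.image (g * ·)) ∩ B).card := hbig g hg
  set S1 := (B.image (h * ·)) ∩ B with hS1
  set S2 := (B.image (g * ·)) ∩ B with hS2
  have hsub1 : S1.image (g * ·) ⊆ B.image (g * ·) :=
    Finset.image_subset_image (Finset.inter_subset_right)
  have hsub2 : S2 ⊆ B.image (g * ·) := Finset.inter_subset_left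
  have hcard1 : (S1.image (g * ·)).card = S1.card :=
    Finset.card_image_of_injective _ (mul_right_injective₀ hgne)
  have hcardgB : (B.image (g * ·)).card = B.card :=
    Finset.card_image_of_injective _ (mul_right_injective₀ hgne)
  have hun : ((S1.image (g * ·)) ∪ S2).card ≤ B.card := by
    rw [← hcardgB]
    exact Finset.card_le_card (Finset.union_subset hsub1 hsub2)
  have hint := Finset.card_union_add_card_inter (S1.image (g * ·)) S2
  have hne : ((S1.image (g * ·)) ∩ S2).Nonempty := by
    rw [← Finset.card_pos]; omega
  obtain ⟨z, hz⟩ := hne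
  obtain ⟨hz1, hz2⟩ := Finset.mem_inter.1 hz
  obtain ⟨s, hs, rfl⟩ := Finset.mem_image.1 hz1
  obtain ⟨hs1, _⟩ := Finset.mem_inter.1 hs
  obtain ⟨b, hb, rfl⟩ := Finset.mem_image.1 hs1
  have hzB : g * (h * b) ∈ B := (Finset.mem_inter.1 hz2).2
  have hbne := hB0 b hb
  exact Finset.mem_div.2 ⟨g * (h * b), hzB, b, hb, by field_simp⟩

theorem stmt11 (A : Finset ℕ) (h0A : 0 ∈ A) (N : ℕ) (hN : N = A.card) (hN2 : 2 ≤ N)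
    (θ : Fin N → ℝ) (h0 : ∀ h : 0 < N, θ ⟨0, h⟩ = 0)
    (hinj : Function.Injective θ)
    (hIoo : ∀ j h, j ≠ ⟨0, h⟩ → θ j ∈ Set.Ioo (0 : ℝ) 1)
    (hspec : ∀ i j, i ≠ j →
      ∑ a ∈ A, Complex.exp (2 * Real.pi * Complex.I * (θ i - θ j)) ^ a = 0)
    (hroots : 2 * Set.ncard {z : ℂ | ‖z‖ = 1 ∧ ∑ a ∈ A, z ^ a = 0}
        < 3 * N - 2) :
    (1 : ℂ) ∈ {z : ℂ | ∃ i j, z = Complex.exp (2 * Real.pi * Complex.I * (θ i - θ j))} ∧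
    {z : ℂ | ∃ i j, z = Complex.exp (2 * Real.pi * Complex.I * (θ i - θ j))}.Finite ∧
    (∀ z ∈ {z : ℂ | ∃ i j, z = Complex.exp (2 * Real.pi * Complex.I * (θ i - θ j))},
      ∀ w ∈ {z : ℂ | ∃ i j, z = Complex.exp (2 * Real.pi * Complex.I * (θ i - θ j))},
        z * w ∈ {z : ℂ | ∃ i j, z = Complex.exp (2 * Real.pi * Complex.I * (θ i - θ j))}) ∧
    (∀ z ∈ {z : ℂ | ∃ i j, z = Complex.exp (2 * Real.pi * Complex.I * (θ i - θ j))},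
      ∃ w ∈ {z : ℂ | ∃ i j, z = Complex.exp (2 * Real.pi * Complex.I * (θ i - θ j))},
        z * w = 1) := by
  have hNpos : 0 < N := by omega
  set e : Fin N → ℂ := fun i => Complex.exp (2 * Real.pi * Complex.I * (θ i)) with he
  have hpi : (2 * Real.pi * Complex.I : ℂ) ≠ 0 := by
    simp [Real.pi_ne_zero, Complex.I_ne_zero]
  have hrange : ∀ i, θ i ∈ Set.Ico (0 : ℝ) 1 := by
    intro i
    by_cases hi : i = ⟨0, hNpos⟩
    · rw [hi, h0]; exact ⟨le_rfl, zero_lt_one⟩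
    · exact ⟨(hIoo i hNpos hi).1.le, (hIoo i hNpos hi).2⟩
  have heinj : Function.Injective e := by
    intro i j hij
    apply hinj
    rw [Complex.exp_eq_exp_iff_exists_int] at hij
    obtain ⟨n, hn⟩ := hij
    have h2 : (2 * Real.pi * Complex.I) * (θ i : ℂ) =
        (2 * Real.pi * Complex.I) * ((θ j : ℝ) + (n : ℝ)) := by
      rw [hn]; push_cast; ring
    have h3 := mul_left_cancel₀ hpi h2
    have h4 : θ i = θ j + (n : ℝ) := by exact_mod_cast h3
    have hi := hrange i
    have hj := hrange j
    have hn0 : n = 0 := by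
      have h5 : -1 < (n : ℝ) := by simp only [Set.mem_Ico] at hi hj; linarith
      have h6 : (n : ℝ) < 1 := by simp only [Set.mem_Ico] at hi hj; linarith
      have h5' : (-1 : ℤ) < n := by exact_mod_cast h5
      have h6' : n < 1 := by exact_mod_cast h6
      omega
    rw [hn0] at h4; simpa using h4
  set B : Finset ℂ := Finset.univ.image e with hB
  have hBcard : B.card = N := by
    rw [hB, Finset.card_image_of_injective _ heinj, Finset.card_univ, Fintype.card_fin]
  have hB0 : ∀ x ∈ B, x ≠ 0 := by
    intro x hx
    obtain ⟨i, _, rfl⟩ := Finset.mem_image.1 hx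
    exact Complex.exp_ne_zero _
  have hexp : ∀ i j, Complex.exp (2 * Real.pi * Complex.I * (θ i - θ j)) = e i / e j := by
    intro i j
    rw [he, ← Complex.exp_sub]
    congr 1; push_cast; ring
  have hSet : {z : ℂ | ∃ i j, z = Complex.exp (2 * Real.pi * Complex.I * (θ i - θ j))}
      = ↑(B / B) := by
    ext z
    simp only [Set.mem_setOf_eq, Finset.coe_div, Set.mem_div]
    constructor
    · rintro ⟨i, j, rfl⟩
      exact ⟨e i, by simp [hB], e j, by simp [hB], (hexp i j).symm⟩
    · rintro ⟨x, hx, y, hy, rfl⟩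
      simp only [hB, Finset.coe_image, Set.mem_image, Finset.mem_coe] at hx hy
      obtain ⟨i, _, rfl⟩ := hx
      obtain ⟨j, _, rfl⟩ := hy
      exact ⟨i, j, (hexp i j).symm⟩
  set R : Set ℂ := {z : ℂ | ‖z‖ = 1 ∧ ∑ a ∈ A, z ^ a = 0} with hR
  have hRfin : R.Finite := by
    set p : ℂ[X] := ∑ a ∈ A, X ^ a with hp
    have hc : p.coeff 0 = 1 := by
      rw [hp, Polynomial.finset_sum_coeff]
      simp only [Polynomial.coeff_X_pow]
      rw [Finset.sum_ite_eq A 0 (fun _ => (1 : ℂ))]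
      simp [h0A]
    have hp0 : p ≠ 0 := fun h => by simp [h] at hc
    refine (Polynomial.finite_setOf_isRoot hp0).subset ?_
    intro z hz
    simp only [hR, Set.mem_setOf_eq] at hz
    simp only [Set.mem_setOf_eq, Polynomial.IsRoot, hp, Polynomial.eval_finset_sum,
      Polynomial.eval_pow, Polynomial.eval_X]
    exact hz.2
  have habs1 : ∀ t : ℝ, ‖Complex.exp (2 * Real.pi * Complex.I * (t : ℂ))‖ = 1 := by
    intro t
    rw [show (2 * Real.pi * Complex.I * (t : ℂ)) = ((2 * Real.pi * t : ℝ) : ℂ) * Complex.I by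
      push_cast; ring]
    exact Complex.norm_exp_ofReal_mul_I _
  have hsubR : ↑((B / B).erase 1) ⊆ R := by
    intro z hz
    rw [Finset.mem_coe, Finset.mem_erase] at hz
    obtain ⟨hz1, hzD⟩ := hz
    obtain ⟨x, hx, y, hy, rfl⟩ := Finset.mem_div.1 hzD
    obtain ⟨i, _, rfl⟩ := Finset.mem_image.1 hx
    obtain ⟨j, _, rfl⟩ := Finset.mem_image.1 hy
    have hij : i ≠ j := by
      rintro rfl; exact hz1 (div_self (Complex.exp_ne_zero _))
    constructor
    · rw [← hexp i j, show ((θ i : ℂ) - (θ j : ℂ)) = ((θ i - θ j : ℝ) : ℂ) by push_cast; ring]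
      exact habs1 _
    · rw [← hexp i j]
      exact hspec i j hij
  have h1D : (1 : ℂ) ∈ B / B := by
    refine Finset.mem_div.2 ⟨e ⟨0, hNpos⟩, by simp [hB], e ⟨0, hNpos⟩, by simp [hB], ?_⟩
    exact div_self (Complex.exp_ne_zero _)
  have hcardD : 2 * (B / B).card < 3 * B.card := by
    have h1 : ((B / B).erase 1).card ≤ R.ncard := by
      have := Set.ncard_le_ncard hsubR hRfin
      rwa [Set.ncard_coe_finset] at this
    have h2 : (B / B).card = ((B / B).erase 1).card + 1 :=
      (Finset.card_erase_add_one h1D).symm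
    rw [hBcard]
    omega
  have hmul := key_mul B hB0 hcardD
  refine ⟨⟨⟨0, hNpos⟩, ⟨0, hNpos⟩, by simp⟩, ?_, ?_, ?_⟩
  · rw [hSet]; exact (B / B).finite_toSet
  · intro z hz w hw
    rw [hSet] at hz hw ⊢
    exact hmul z hz w hw
  · rintro z ⟨i, j, rfl⟩
    refine ⟨Complex.exp (2 * Real.pi * Complex.I * (θ j - θ i)), ⟨j, i, rfl⟩, ?_⟩
    rw [← Complex.exp_add, show (2 * Real.pi * Complex.I * ((θ i : ℂ) - θ j)
      + 2 * Real.pi * Complex.I * ((θ j : ℂ) - θ i)) = 0 by ring, Complex.exp_zero]
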